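/- Let n ≥ 1, let R = MvPowerSeries (Fin n) ℂ, let j ∈ {1,…,n}, and let S be the subalgebra O_{n,L} of R consisting of power series all of whose exponents k satisfy k_i = 0 for all i < j. Let J be an ideal of R of finite colength, i.e. R/J is a finite-dimensional ℂ-vector space. Let J_L be the ideal of S generated by {f_L : f ∈ J}, and let ini(J)_L be the ideal of S generated by {g_L : g ∈ ini(J)} (each such g_L lies in S). Then ini_S(J_L) = ini(J)_L, where ini_S(J_L) denotes the ideal of S generated by the monomials X^{inexp(g)} for nonzero g ∈ J_L. -/

import Mathlib

open MvPowerSeries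
open scoped Classical

/-- The initial exponent of a multivariate power series: the least element of its
support with respect to the lexicographic order on exponents, which corresponds to
the negative lexicographical order on monomials (and `0` for the zero series,
by convention). -/
noncomputable def inexp {n : ℕ} (f : MvPowerSeries (Fin n) ℂ) : Fin n →₀ ℕ :=
  if hf : f = 0 then 0 else
    ofLex (@WellFounded.min (Lex (Fin n →₀ ℕ)) (· < ·) IsWellFounded.wf
      {k : Lex (Fin n →₀ ℕ) | MvPowerSeries.coeff (R := ℂ) (ofLex k) f ≠ 0}
      (by
        by_contra h
        rw [Set.not_nonempty_iff_eq_empty, Set.eq_empty_iff_forall_notMem] at h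
        exact hf (MvPowerSeries.ext fun k => by
          have := h (toLex k)
          simpa using this)))

/-- `truncL n j f` is `f_L`: the power series obtained from `f` by keeping exactly
those terms whose exponent `k` satisfies `k_i = 0` for all (1-based) variable indices
`i < j`, i.e. for all `i : Fin n` with `(i : ℕ) + 1 < j`. -/
noncomputable def truncL (n j : ℕ) (f : MvPowerSeries (Fin n) ℂ) :
    MvPowerSeries (Fin n) ℂ :=
  fun k => if ∀ i : Fin n, (i : ℕ) + 1 < j → k i = 0 then MvPowerSeries.coeff (R := ℂ) k f else 0

/-- The subalgebra `S = O_{n,L}` (for `L = {j,…,n}`) of power series all of whose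
exponents `k` satisfy `k_i = 0` for all (1-based) variable indices `i < j`. -/
noncomputable def lowVanish (n j : ℕ) : Subalgebra ℂ (MvPowerSeries (Fin n) ℂ) where
  carrier := {f | ∀ k : Fin n →₀ ℕ, MvPowerSeries.coeff (R := ℂ) k f ≠ 0 →
    ∀ i : Fin n, (i : ℕ) + 1 < j → k i = 0}
  add_mem' := by
    intro f g hf hg k hk i hi
    by_cases h1 : MvPowerSeries.coeff (R := ℂ) k f ≠ 0
    · exact hf k h1 i hi
    · push_neg at h1
      have : MvPowerSeries.coeff (R := ℂ) k g ≠ 0 := by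
        intro h2
        apply hk
        rw [map_add, h1, h2, add_zero]
      exact hg k this i hi
  mul_mem' := by
    intro f g hf hg k hk i hi
    rw [MvPowerSeries.coeff_mul] at hk
    obtain ⟨p, hp, hne⟩ := Finset.exists_ne_zero_of_sum_ne_zero hk
    rw [Finset.HasAntidiagonal.mem_antidiagonal] at hp
    have h1 : MvPowerSeries.coeff (R := ℂ) p.1 f ≠ 0 := fun h => hne (by rw [h, zero_mul])
    have h2 : MvPowerSeries.coeff (R := ℂ) p.2 g ≠ 0 := fun h => hne (by rw [h, mul_zero])
    have e1 := hf p.1 h1 i hi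
    have e2 := hg p.2 h2 i hi
    have : k i = p.1 i + p.2 i := by rw [← hp]; rfl
    omega
  algebraMap_mem' := by
    intro c k hk i hi
    have : MvPowerSeries.coeff (R := ℂ) k ((MvPowerSeries.C (σ := Fin n) (R := ℂ)) c) ≠ 0 := hk
    rw [MvPowerSeries.coeff_C] at this
    by_cases h : k = 0
    · simp [h]
    · simp [h] at this

/-- The initial ideal `ini(K)` of an ideal `K` of `R = MvPowerSeries (Fin n) ℂ`:
the ideal generated by the initial monomials `X^{inexp f}` of the nonzero `f ∈ K`. -/
noncomputable def iniIdeal {n : ℕ} (K : Ideal (MvPowerSeries (Fin n) ℂ)) :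
    Ideal (MvPowerSeries (Fin n) ℂ) :=
  Ideal.span {g | ∃ f ∈ K, f ≠ 0 ∧ g = MvPowerSeries.monomial (R := ℂ) (inexp f) 1}

/-- The initial ideal `ini_S(K)` of an ideal `K` of the subalgebra `S = lowVanish n j`:
the ideal of `S` generated by the monomials `X^{inexp g}` of the nonzero `g ∈ K`. -/
noncomputable def iniIdealSub {n : ℕ} (j : ℕ) (K : Ideal (lowVanish n j)) :
    Ideal (lowVanish n j) :=
  Ideal.span {g : lowVanish n j | ∃ f ∈ K,
    (f : MvPowerSeries (Fin n) ℂ) ≠ 0 ∧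
    (g : MvPowerSeries (Fin n) ℂ) =
      MvPowerSeries.monomial (R := ℂ) (inexp (f : MvPowerSeries (Fin n) ℂ)) 1}

set_option synthInstance.maxHeartbeats 400000
set_option maxHeartbeats 800000

section Aux

variable {n j : ℕ}

lemma coeff_truncL (f : MvPowerSeries (Fin n) ℂ) (k : Fin n →₀ ℕ) :
    MvPowerSeries.coeff (R := ℂ) k (truncL n j f) =
      if ∀ i : Fin n, (i : ℕ) + 1 < j → k i = 0 then MvPowerSeries.coeff (R := ℂ) k f else 0 := rfl

lemma truncL_mem (f : MvPowerSeries (Fin n) ℂ) : truncL n j f ∈ lowVanish n j := by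
  intro k hk
  rw [coeff_truncL] at hk
  split_ifs at hk with h
  · exact h
  · exact (hk rfl).elim

lemma truncL_eq_self {f : MvPowerSeries (Fin n) ℂ} (hf : f ∈ lowVanish n j) :
    truncL n j f = f := by
  ext k
  rw [coeff_truncL]
  split_ifs with h
  · rfl
  · by_contra hc
    exact h (hf k fun e => hc e.symm)

lemma truncL_zero : truncL n j (0 : MvPowerSeries (Fin n) ℂ) = 0 := by
  ext k
  rw [coeff_truncL]
  split_ifs <;> simp

lemma truncL_add (f g : MvPowerSeries (Fin n) ℂ) :
    truncL n j (f + g) = truncL n j f + truncL n j g := by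
  ext k
  rw [map_add, coeff_truncL, coeff_truncL, coeff_truncL, map_add]
  split_ifs <;> simp

lemma truncL_mul {s : MvPowerSeries (Fin n) ℂ} (hs : s ∈ lowVanish n j)
    (g : MvPowerSeries (Fin n) ℂ) :
    truncL n j (s * g) = s * truncL n j g := by
  ext k
  rw [coeff_truncL]
  split_ifs with h
  · rw [MvPowerSeries.coeff_mul, MvPowerSeries.coeff_mul]
    refine Finset.sum_congr rfl fun p hp => ?_
    rw [Finset.HasAntidiagonal.mem_antidiagonal] at hp
    congr 1
    rw [coeff_truncL, if_pos]
    intro i hi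
    have h1 : p.1 i + p.2 i = 0 := by
      rw [← Finsupp.add_apply, hp]
      exact h i hi
    omega
  · by_contra hc
    exact h (mul_mem hs (truncL_mem g) k fun e => hc e.symm)

lemma coeff_inexp_ne_zero {f : MvPowerSeries (Fin n) ℂ} (hf : f ≠ 0) :
    MvPowerSeries.coeff (R := ℂ) (inexp f) f ≠ 0 := by
  rw [inexp, dif_neg hf]
  exact WellFounded.min_mem IsWellFounded.wf
    {k : Lex (Fin n →₀ ℕ) | MvPowerSeries.coeff (R := ℂ) (ofLex k) f ≠ 0} _

lemma inexp_min {f : MvPowerSeries (Fin n) ℂ} (hf : f ≠ 0) {k : Fin n →₀ ℕ}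
    (hk : MvPowerSeries.coeff (R := ℂ) k f ≠ 0) : toLex (inexp f) ≤ toLex k := by
  rw [inexp, dif_neg hf, toLex_ofLex]
  exact not_lt.mp (WellFounded.not_lt_min IsWellFounded.wf
    {k : Lex (Fin n →₀ ℕ) | MvPowerSeries.coeff (R := ℂ) (ofLex k) f ≠ 0}
    (show toLex k ∈ _ from hk))

lemma lex_lt_of_lowZero {α β : Fin n →₀ ℕ}
    (hα : ∀ i : Fin n, (i : ℕ) + 1 < j → α i = 0)
    (hβ : ¬ ∀ i : Fin n, (i : ℕ) + 1 < j → β i = 0) :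
    toLex α < toLex β := by
  push_neg at hβ
  obtain ⟨i, hij, hi⟩ := hβ
  have hne : {i : Fin n | (i : ℕ) + 1 < j ∧ β i ≠ 0}.Nonempty := ⟨i, hij, hi⟩
  obtain ⟨i0, hi0, hmin⟩ := Set.exists_min_image _ id (Set.toFinite _) hne
  rw [Finsupp.Lex.lt_iff]
  refine ⟨i0, fun l hl => ?_, ?_⟩
  · have hl' : (l : ℕ) < (i0 : ℕ) := hl
    have hlj : (l : ℕ) + 1 < j := by
      have := hi0.1
      omega
    have hβl : β l = 0 := by
      by_contra hc
      exact absurd (hmin l ⟨hlj, hc⟩) (not_le.mpr hl)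
    show α l = β l
    rw [hα l hlj, hβl]
  · show α i0 < β i0
    rw [hα i0 hi0.1]
    exact Nat.pos_of_ne_zero hi0.2

lemma lowZero_inexp_truncL {f : MvPowerSeries (Fin n) ℂ} (hf : truncL n j f ≠ 0) :
    (∀ i : Fin n, (i : ℕ) + 1 < j → inexp (truncL n j f) i = 0) ∧
      MvPowerSeries.coeff (R := ℂ) (inexp (truncL n j f)) f ≠ 0 := by
  have h := coeff_inexp_ne_zero hf
  rw [coeff_truncL] at h
  split_ifs at h with hc
  · exact ⟨hc, h⟩
  · exact (h rfl).elim

lemma inexp_truncL {f : MvPowerSeries (Fin n) ℂ} (hf : truncL n j f ≠ 0) :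
    inexp f = inexp (truncL n j f) := by
  obtain ⟨hP, hcoeff⟩ := lowZero_inexp_truncL hf
  have hf0 : f ≠ 0 := fun h => hf (by rw [h, truncL_zero])
  have h1 : toLex (inexp f) ≤ toLex (inexp (truncL n j f)) := inexp_min hf0 hcoeff
  have h2 : toLex (inexp (truncL n j f)) ≤ toLex (inexp f) := by
    by_cases hQ : ∀ i : Fin n, (i : ℕ) + 1 < j → inexp f i = 0
    · apply inexp_min hf
      rw [coeff_truncL, if_pos hQ]
      exact coeff_inexp_ne_zero hf0
    · exact le_of_lt (lex_lt_of_lowZero hP hQ)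
  exact toLex.injective (le_antisymm h1 h2)

lemma truncL_ne_zero {f : MvPowerSeries (Fin n) ℂ} (hf : f ≠ 0)
    (hP : ∀ i : Fin n, (i : ℕ) + 1 < j → inexp f i = 0) : truncL n j f ≠ 0 := by
  intro h0
  have h : MvPowerSeries.coeff (R := ℂ) (inexp f) (truncL n j f) ≠ 0 := by
    rw [coeff_truncL, if_pos hP]
    exact coeff_inexp_ne_zero hf
  rw [h0, map_zero] at h
  exact h rfl

lemma monomial_mem_lowVanish {α : Fin n →₀ ℕ}
    (hα : ∀ i : Fin n, (i : ℕ) + 1 < j → α i = 0) :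
    (MvPowerSeries.monomial (R := ℂ) α 1 : MvPowerSeries (Fin n) ℂ) ∈ lowVanish n j := by
  intro k hk
  rw [MvPowerSeries.coeff_monomial] at hk
  split_ifs at hk with h
  · subst h
    exact hα
  · exact (hk rfl).elim

lemma truncL_mul_monomial_of_not (r : MvPowerSeries (Fin n) ℂ) {α : Fin n →₀ ℕ}
    (hα : ¬ ∀ i : Fin n, (i : ℕ) + 1 < j → α i = 0) :
    truncL n j (r * MvPowerSeries.monomial (R := ℂ) α 1) = 0 := by
  ext k
  rw [map_zero, coeff_truncL]
  split_ifs with h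
  · rw [MvPowerSeries.coeff_mul_monomial, if_neg]
    intro hle
    apply hα
    intro i hi
    have h1 := h i hi
    have h2 := Finsupp.le_def.mp hle i
    omega
  · rfl

/-- Truncation as an additive monoid hom into the subalgebra. -/
noncomputable def TL (n j : ℕ) : MvPowerSeries (Fin n) ℂ →+ (lowVanish n j) where
  toFun f := ⟨truncL n j f, truncL_mem f⟩
  map_zero' := Subtype.ext truncL_zero
  map_add' f g := Subtype.ext (truncL_add f g)

/-- The set of truncations of elements of an ideal `K` is an ideal of the subalgebra. -/
noncomputable def idealTrunc (n j : ℕ) (K : Ideal (MvPowerSeries (Fin n) ℂ)) :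
    Ideal (lowVanish n j) where
  carrier := {g | ∃ f ∈ K, (g : MvPowerSeries (Fin n) ℂ) = truncL n j f}
  zero_mem' := ⟨0, K.zero_mem, by rw [truncL_zero]; rfl⟩
  add_mem' := by
    rintro a b ⟨f, hf, ha⟩ ⟨g, hg, hb⟩
    exact ⟨f + g, K.add_mem hf hg, by rw [truncL_add, ← ha, ← hb]; rfl⟩
  smul_mem' := by
    rintro c a ⟨f, hf, ha⟩
    refine ⟨(c : MvPowerSeries (Fin n) ℂ) * f, K.mul_mem_left _ hf, ?_⟩
    rw [truncL_mul c.2, ← ha]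
    rfl

lemma mem_idealTrunc {K : Ideal (MvPowerSeries (Fin n) ℂ)} {g : lowVanish n j} :
    g ∈ idealTrunc n j K ↔ ∃ f ∈ K, (g : MvPowerSeries (Fin n) ℂ) = truncL n j f :=
  Iff.rfl

lemma span_trunc_eq (K : Ideal (MvPowerSeries (Fin n) ℂ)) :
    Ideal.span {g : lowVanish n j | ∃ f ∈ K, (g : MvPowerSeries (Fin n) ℂ) = truncL n j f} =
      idealTrunc n j K := by
  apply le_antisymm
  · rw [Ideal.span_le]
    exact fun g hg => mem_idealTrunc.mpr hg
  · exact fun g hg => Ideal.subset_span (mem_idealTrunc.mp hg)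

end Aux

/-- Let `n ≥ 1`, `R = MvPowerSeries (Fin n) ℂ`, `j ∈ {1,…,n}` and let `S = O_{n,L}`
(`L = {j,…,n}`) be the subalgebra of series whose exponents vanish below `j`.
Let `J` be an ideal of `R` of finite colength. Let `J_L` be the ideal of `S`
generated by the truncations `f_L` for `f ∈ J`, and let `ini(J)_L` be the ideal of `S`
generated by the truncations `g_L` for `g ∈ ini(J)`. Then `ini_S(J_L) = ini(J)_L`. -/
theorem stmt11 (n j : ℕ) (hn : 1 ≤ n) (hj1 : 1 ≤ j) (hjn : j ≤ n)
    (J : Ideal (MvPowerSeries (Fin n) ℂ))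
    (hJ : FiniteDimensional ℂ (MvPowerSeries (Fin n) ℂ ⧸ J)) :
    iniIdealSub j
        (Ideal.span {g : lowVanish n j | ∃ f ∈ J,
          (g : MvPowerSeries (Fin n) ℂ) = truncL n j f}) =
      Ideal.span {g : lowVanish n j | ∃ f ∈ iniIdeal J,
        (g : MvPowerSeries (Fin n) ℂ) = truncL n j f} := by
  classical
  rw [iniIdealSub, span_trunc_eq]
  apply le_antisymm
  · rw [Ideal.span_le]
    rintro g ⟨f, hfmem, hf0, hg⟩
    apply Ideal.subset_span
    obtain ⟨h, hhJ, hfh⟩ := mem_idealTrunc.mp hfmem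
    have htr : truncL n j h ≠ 0 := hfh ▸ hf0
    have hP := (lowZero_inexp_truncL htr).1
    have hh0 : h ≠ 0 := fun e => htr (by rw [e, truncL_zero])
    have hie : inexp h = inexp (truncL n j h) := inexp_truncL htr
    refine ⟨MvPowerSeries.monomial (R := ℂ) (inexp h) 1, ?_, ?_⟩
    · exact Ideal.subset_span ⟨h, hhJ, hh0, rfl⟩
    · rw [hg, hfh, hie, truncL_eq_self (monomial_mem_lowVanish hP)]
  · rw [Ideal.span_le]
    rintro g ⟨f, hf, hg⟩
    have hgeq : g = TL n j f := Subtype.ext hg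
    rw [hgeq]
    rw [iniIdeal] at hf
    obtain ⟨c, hcsupp, hsum⟩ := Submodule.mem_span_set.mp hf
    rw [← hsum, map_finsuppSum, Finsupp.sum]
    apply Ideal.sum_mem
    intro m hm
    obtain ⟨F, hFJ, hF0, hmE⟩ := hcsupp hm
    subst hmE
    rw [smul_eq_mul]
    by_cases hP : ∀ i : Fin n, (i : ℕ) + 1 < j → inexp F i = 0
    · have hmemS := monomial_mem_lowVanish (j := j) hP
      have hmul : truncL n j
            (c (MvPowerSeries.monomial (R := ℂ) (inexp F) 1) * MvPowerSeries.monomial (R := ℂ) (inexp F) 1)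
          = truncL n j (c (MvPowerSeries.monomial (R := ℂ) (inexp F) 1))
              * MvPowerSeries.monomial (R := ℂ) (inexp F) 1 := by
        rw [mul_comm (c (MvPowerSeries.monomial (R := ℂ) (inexp F) 1)), truncL_mul hmemS, mul_comm]
      have heq : TL n j
            (c (MvPowerSeries.monomial (R := ℂ) (inexp F) 1) * MvPowerSeries.monomial (R := ℂ) (inexp F) 1)
          = TL n j (c (MvPowerSeries.monomial (R := ℂ) (inexp F) 1))
              * ⟨MvPowerSeries.monomial (R := ℂ) (inexp F) 1, hmemS⟩ :=
        Subtype.ext hmul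
      rw [heq]
      apply Ideal.mul_mem_left
      apply Ideal.subset_span
      have htr := truncL_ne_zero hF0 hP
      refine ⟨⟨truncL n j F, truncL_mem F⟩, ?_, htr, ?_⟩
      · exact mem_idealTrunc.mpr ⟨F, hFJ, rfl⟩
      · show MvPowerSeries.monomial (R := ℂ) (inexp F) 1
          = MvPowerSeries.monomial (R := ℂ) (inexp (truncL n j F)) 1
        rw [← inexp_truncL htr]
    · have hz : truncL n j
            (c (MvPowerSeries.monomial (R := ℂ) (inexp F) 1) * MvPowerSeries.monomial (R := ℂ) (inexp F) 1)
          = 0 := truncL_mul_monomial_of_not _ hP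
      have heq : TL n j
            (c (MvPowerSeries.monomial (R := ℂ) (inexp F) 1) * MvPowerSeries.monomial (R := ℂ) (inexp F) 1)
          = 0 := Subtype.ext hz
      rw [heq]
      exact Ideal.zero_mem _
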